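/- arXiv:0809.2866 — 3 statements merged into one kernel-verified Lean document; each statement's English description precedes it below -/
import Mathlib

section
/- Define on the vector space spanned by planar rooted trees decorated by 𝒟 the product t ⋆ t' = ∑_{i=0}^{n} B_d(t₁…t_i t t_{i+1}…t_n), where t' = B_d(t₁…t_n) (t grafted on the root of t' in all possible positions). Then ⋆ is a left non-associative permutative product: t₁ ⋆ (t₂ ⋆ t₃) = t₂ ⋆ (t₁ ⋆ t₃) for all trees t₁, t₂, t₃. -/
/-- Planar rooted trees decorated by `D`: a decoration of the root together with the
ordered list of subtrees grafted on the root. -/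
inductive PTree (D : Type*) : Type _
  | node : D → List (PTree D) → PTree D

/-- The linear span of decorated planar rooted trees (the free brace algebra `Br(𝒟)`). -/
abbrev TreeSpan (D : Type*) := PTree D →₀ ℤ

/-- Linear extension of a map defined on the basis of trees. -/
noncomputable def extend {D : Type*} (f : PTree D → TreeSpan D) (x : TreeSpan D) :
    TreeSpan D :=
  x.sum fun s c => c • f s

/-- `t ⋆ t' = ∑_{i=0}^{n} B_d(t₁ … t_i t t_{i+1} … t_n)` for `t' = B_d(t₁ … t_n)`:
grafting of `t` on the root of `t'` in all possible positions. -/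
noncomputable def starT {D : Type*} (t : PTree D) : PTree D → TreeSpan D
  | .node d l =>
      ((List.range (l.length + 1)).map fun i =>
        Finsupp.single (PTree.node d (l.insertIdx i t)) (1 : ℤ)).sum

private lemma list_sum_range {M : Type*} [AddCommMonoid M] (n : ℕ) (f : ℕ → M) :
    ((List.range n).map f).sum = ∑ i ∈ Finset.range n, f i := by
  induction n with
  | zero => simp
  | succ n ih =>
      rw [List.range_succ, Finset.sum_range_succ, List.map_append, List.sum_append, ih]; simp

lemma starT_eq {D : Type*} (t : PTree D) (d : D) (l : List (PTree D)) :
    starT t (PTree.node d l) =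
      ∑ i ∈ Finset.range (l.length + 1),
        Finsupp.single (PTree.node d (l.insertIdx i t)) (1 : ℤ) := by
  rw [starT, list_sum_range]

lemma extend_add {D : Type*} (f : PTree D → TreeSpan D) (x y : TreeSpan D) :
    extend f (x + y) = extend f x + extend f y :=
  Finsupp.sum_add_index' (by simp) (fun s a b => add_smul a b (f s))

lemma extend_sum {D : Type*} {ι : Type*} (f : PTree D → TreeSpan D) (s : Finset ι)
    (g : ι → TreeSpan D) :
    extend f (∑ i ∈ s, g i) = ∑ i ∈ s, extend f (g i) :=
  map_sum (AddMonoidHom.mk' (extend f) (extend_add f)) g s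

lemma extend_single {D : Type*} (f : PTree D → TreeSpan D) (s : PTree D) :
    extend f (Finsupp.single s (1 : ℤ)) = f s := by
  unfold extend
  rw [Finsupp.sum_single_index (by simp), one_smul]

lemma lhs_expand {D : Type*} (tA tB : PTree D) (d : D) (l : List (PTree D)) :
    extend (starT tA) (starT tB (PTree.node d l)) =
      ∑ p ∈ Finset.range (l.length + 1) ×ˢ Finset.range (l.length + 2),
        Finsupp.single (PTree.node d ((l.insertIdx p.1 tB).insertIdx p.2 tA)) (1 : ℤ) := by
  rw [starT_eq, extend_sum, Finset.sum_product]
  refine Finset.sum_congr rfl fun i hi => ?_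
  rw [extend_single, starT_eq,
    List.length_insertIdx_of_le_length (by simpa [Nat.lt_succ_iff] using Finset.mem_range.mp hi)]

/-- The root-grafting product `⋆` on planar decorated rooted trees is a left
non-associative permutative product: `t₁ ⋆ (t₂ ⋆ t₃) = t₂ ⋆ (t₁ ⋆ t₃)`. -/
theorem star_naPermutative {D : Type*} (t₁ t₂ t₃ : PTree D) :
    extend (starT t₁) (starT t₂ t₃) = extend (starT t₂) (starT t₁ t₃) := by
  obtain ⟨d, l⟩ := t₃
  rw [lhs_expand, lhs_expand]
  set n := l.length with hn
  refine Finset.sum_nbij' (i := fun p => if p.2 ≤ p.1 then (p.2, p.1 + 1) else (p.2 - 1, p.1))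
    (j := fun p => if p.2 ≤ p.1 then (p.2, p.1 + 1) else (p.2 - 1, p.1))
    ?_ ?_ ?_ ?_ ?_
  · rintro ⟨i, j⟩ hp
    simp only [Finset.mem_product, Finset.mem_range] at hp ⊢
    split <;> omega
  · rintro ⟨i, j⟩ hp
    simp only [Finset.mem_product, Finset.mem_range] at hp ⊢
    split <;> omega
  · rintro ⟨i, j⟩ hp
    simp only [Finset.mem_product, Finset.mem_range] at hp
    by_cases h : j ≤ i
    · simp only [h, if_true]
      rw [if_neg (by omega)]
      simp
    · simp only [h, if_false]
      rw [if_pos (by omega)]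
      have hj : j - 1 + 1 = j := by omega
      rw [hj]
  · rintro ⟨i, j⟩ hp
    simp only [Finset.mem_product, Finset.mem_range] at hp
    by_cases h : j ≤ i
    · simp only [h, if_true]
      rw [if_neg (by omega)]
      simp
    · simp only [h, if_false]
      rw [if_pos (by omega)]
      have hj : j - 1 + 1 = j := by omega
      rw [hj]
  · rintro ⟨i, j⟩ hp
    simp only [Finset.mem_product, Finset.mem_range] at hp
    by_cases h : j ≤ i
    · simp only [h, if_true]
      rw [List.insertIdx_comm t₁ t₂ (i := j) (j := i) (l := l) h (by omega)]
    · simp only [h, if_false]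
      have hj : j - 1 + 1 = j := by omega
      rw [← List.insertIdx_comm t₂ t₁ (i := i) (j := j - 1) (l := l) (by omega) (by omega), hj]
end

section
/- Let F(x) = ∑_{n≥1} aₙ xⁿ and G(x) = ∑_{n≥1} bₙ xⁿ be formal power series with integer coefficients, zero constant term, and suppose G(x) = F(x) · ∏_{i≥1} (1 − x^i)^{a_i − b_i} (the product makes sense as each factor is 1 + O(x^i)). Then aₙ = bₙ for all n, i.e. F = G. -/
open PowerSeries Finset

private lemma one_sub_Xpow_pow (i e : ℕ) :
    ∃ r : PowerSeries ℚ, (1 - X ^ i) ^ e = 1 + X ^ i * r := by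
  have h : (X ^ i : PowerSeries ℚ) ∣ (1 - X ^ i) ^ e - 1 := by
    have h0 := sub_dvd_pow_sub_pow (1 - X ^ i : PowerSeries ℚ) 1 e
    rw [show ((1 : PowerSeries ℚ) - X ^ i) - 1 = -(X ^ i) by ring, one_pow, neg_dvd] at h0
    exact h0
  obtain ⟨r, hr⟩ := h
  exact ⟨r, by linear_combination hr⟩

private lemma const_prod (s : Finset ℕ) (hs : ∀ i ∈ s, 1 ≤ i) (e : ℕ → ℕ) :
    constantCoeff (R := ℚ) (∏ i ∈ s, (1 - X ^ i) ^ e i) = 1 := by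
  rw [map_prod]
  apply Finset.prod_eq_one
  intro i hi
  have hi0 : i ≠ 0 := by have := hs i hi; omega
  simp [map_pow, map_sub, zero_pow hi0]

/-- Series-comparison lemma: if `F(x) = ∑ aₙxⁿ` and `G(x) = ∑ bₙxⁿ` have integer
coefficients, zero constant terms, and `G = F · ∏_{i≥1} (1-x^i)^{a_i - b_i}` (encoded,
with the integer exponents split into positive and negative parts and the products
harmlessly truncated, as `G·∏(1-x^i)^{(b_i-a_i)₊} = F·∏(1-x^i)^{(a_i-b_i)₊}`), then
`aₙ = bₙ` for all `n`, i.e. `F = G`. -/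
theorem series_comparison (a b : ℕ → ℤ) (ha0 : a 0 = 0) (hb0 : b 0 = 0)
    (h : ∀ N : ℕ,
      (PowerSeries.coeff (R := ℚ) N) ((PowerSeries.mk fun n => (b n : ℚ)) *
        ∏ i ∈ Finset.Icc 1 N, (1 - PowerSeries.X ^ i) ^ (b i - a i).toNat) =
      (PowerSeries.coeff (R := ℚ) N) ((PowerSeries.mk fun n => (a n : ℚ)) *
        ∏ i ∈ Finset.Icc 1 N, (1 - PowerSeries.X ^ i) ^ (a i - b i).toNat)) :
    ∀ n, a n = b n := by
  intro n
  induction n using Nat.strong_induction_on with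
  | _ n ih =>
    rcases Nat.eq_zero_or_pos n with rfl | hn
    · rw [ha0, hb0]
    obtain ⟨m, rfl⟩ : ∃ m, n = m + 1 := ⟨n - 1, by omega⟩
    set A : PowerSeries ℚ := PowerSeries.mk fun n => (a n : ℚ) with hA
    set B : PowerSeries ℚ := PowerSeries.mk fun n => (b n : ℚ) with hB
    set Q : PowerSeries ℚ := ∏ i ∈ Finset.Icc 1 m, (1 - X ^ i) ^ (a i - b i).toNat with hQ
    have hh := h (m + 1)
    rw [Finset.prod_Icc_succ_top (by omega), Finset.prod_Icc_succ_top (by omega)] at hh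
    have hprodeq : (∏ i ∈ Finset.Icc 1 m, (1 - X ^ i : PowerSeries ℚ) ^ (b i - a i).toNat) = Q := by
      apply Finset.prod_congr rfl
      intro i hi
      have hi' : i < m + 1 := by have := (Finset.mem_Icc.mp hi).2; omega
      rw [ih i hi']
    rw [hprodeq] at hh
    obtain ⟨r1, hr1⟩ := one_sub_Xpow_pow (m + 1) (b (m+1) - a (m+1)).toNat
    obtain ⟨r2, hr2⟩ := one_sub_Xpow_pow (m + 1) (a (m+1) - b (m+1)).toNat
    rw [hr1, hr2] at hh
    have key : ∀ F g : PowerSeries ℚ, constantCoeff (R := ℚ) F = 0 →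
        coeff (R := ℚ) (m+1) (X ^ (m+1) * (F * g)) = 0 := by
      intro F g hF
      have h1 : coeff (R := ℚ) (0 + (m+1)) (X ^ (m+1) * (F * g)) = coeff (R := ℚ) 0 (F * g) :=
        coeff_X_pow_mul (F * g) (m+1) 0
      rw [zero_add] at h1
      rw [h1, coeff_zero_eq_constantCoeff, map_mul, hF, zero_mul]
    have hBconst : constantCoeff (R := ℚ) B = 0 := by
      simp [hB, coeff_zero_eq_constantCoeff.symm, hb0]
    have hAconst : constantCoeff (R := ℚ) A = 0 := by
      simp [hA, coeff_zero_eq_constantCoeff.symm, ha0]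
    have e1 : B * (Q * (1 + X ^ (m+1) * r1)) = B * Q + X ^ (m+1) * (B * (Q * r1)) := by ring
    have e2 : A * (Q * (1 + X ^ (m+1) * r2)) = A * Q + X ^ (m+1) * (A * (Q * r2)) := by ring
    rw [e1, e2, map_add, map_add, key B (Q * r1) hBconst, key A (Q * r2) hAconst,
      add_zero, add_zero] at hh
    -- now hh : coeff (m+1) (B*Q) = coeff (m+1) (A*Q)
    have hzero : coeff (R := ℚ) (m+1) ((B - A) * Q) = 0 := by
      rw [sub_mul, map_sub, hh, sub_self]
    have hQ0 : constantCoeff (R := ℚ) Q = 1 := by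
      apply const_prod
      intro i hi
      exact (Finset.mem_Icc.mp hi).1
    rw [PowerSeries.coeff_mul] at hzero
    rw [Finset.sum_eq_single (m+1, 0)] at hzero
    · have hcoeff : coeff (R := ℚ) (m+1) (B - A) = (b (m+1) : ℚ) - a (m+1) := by
        simp [hA, hB]
      rw [hcoeff] at hzero
      have : ((coeff (R := ℚ) 0) Q : ℚ) = 1 := by
        rw [coeff_zero_eq_constantCoeff, hQ0]
      rw [this, mul_one, sub_eq_zero] at hzero
      exact_mod_cast hzero.symm
    · intro p hp hne
      have hsum : p.1 + p.2 = m + 1 := Finset.HasAntidiagonal.mem_antidiagonal.mp hp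
      have hlt : p.1 < m + 1 := by
        rcases Nat.lt_or_ge p.1 (m+1) with h' | h'
        · exact h'
        · exfalso; apply hne
          have : p.1 = m + 1 := by omega
          have : p.2 = 0 := by omega
          exact Prod.ext (by omega) this
      have : coeff (R := ℚ) p.1 (B - A) = 0 := by
        have := ih p.1 hlt
        simp [hA, hB, this]
      rw [this, zero_mul]
    · intro habs
      exfalso
      exact habs (Finset.HasAntidiagonal.mem_antidiagonal.mpr (by omega))
end

section
/- Let D ≥ 1, let T(x) = (1−√(1−4Dx))/2 with coefficients t'ₙ, and define V(x) = T(x) · ∏_{i≥1} (1 − x^i)^{t'ᵢ}. Then all coefficients of V(x) are non-negative integers; moreover the coefficient of x² in V(x) is 0 and the coefficient of x³ is D²(D−1)/2. -/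
open PowerSeries Finset

namespace BraceLowAux

noncomputable section

/-- geometric series `1/(1-X^s)` -/
def geom (s : ℕ) : PowerSeries ℚ := PowerSeries.mk fun n => if s ∣ n then 1 else 0

lemma geom_inv {s : ℕ} (hs : 1 ≤ s) : (1 - (X : PowerSeries ℚ) ^ s) * geom s = 1 := by
  ext n
  simp only [geom, sub_mul, one_mul, map_sub, coeff_mk, PowerSeries.coeff_one,
    PowerSeries.coeff_X_pow_mul']
  rcases Nat.eq_zero_or_pos n with rfl | hn
  · rw [if_pos (dvd_zero s), if_neg (by omega : ¬ s ≤ 0), if_pos rfl]; ring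
  · rw [if_neg (by omega : ¬ n = 0)]
    by_cases h : s ≤ n
    · rw [if_pos h]
      by_cases hd : s ∣ n
      · rw [if_pos hd, if_pos (Nat.dvd_sub hd dvd_rfl)]; ring
      · rw [if_neg hd, if_neg (fun hc => hd (by
          have h2 := Nat.dvd_add hc (dvd_refl s)
          rwa [Nat.sub_add_cancel h] at h2))]
        ring
    · rw [if_neg h, if_neg (fun hd => h (Nat.le_of_dvd hn hd))]
      ring

/-- all coefficients are naturals -/
def NN (f : PowerSeries ℚ) : Prop := ∀ n : ℕ, ∃ m : ℕ, coeff (R := ℚ) n f = m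

/-- coefficients up to `N` are naturals -/
def NNupto (N : ℕ) (f : PowerSeries ℚ) : Prop := ∀ n ≤ N, ∃ m : ℕ, coeff (R := ℚ) n f = m

lemma NN.one : NN 1 := fun n =>
  ⟨if n = 0 then 1 else 0, by rw [PowerSeries.coeff_one]; split <;> simp⟩

lemma geom_NN (s : ℕ) : NN (geom s) := fun n =>
  ⟨if s ∣ n then 1 else 0, by simp only [BraceLowAux.geom, coeff_mk]; split <;> simp⟩

lemma NNupto.mulNN {N : ℕ} {f g : PowerSeries ℚ} (hf : NNupto N f) (hg : NN g) :
    NNupto N (f * g) := by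
  intro n hn
  rw [PowerSeries.coeff_mul]
  have key : ∀ p ∈ antidiagonal n, ∃ m : ℕ, coeff (R := ℚ) p.1 f * coeff (R := ℚ) p.2 g = m := by
    intro p hp
    rw [HasAntidiagonal.mem_antidiagonal] at hp
    obtain ⟨a, ha⟩ := hf p.1 (le_trans (by omega) hn)
    obtain ⟨b, hb⟩ := hg p.2
    exact ⟨a * b, by rw [ha, hb]; push_cast; ring⟩
  choose F hF using key
  refine ⟨∑ p ∈ (antidiagonal n).attach, F p.1 p.2, ?_⟩
  rw [← Finset.sum_attach (antidiagonal n) (fun p => coeff (R := ℚ) p.1 f * coeff (R := ℚ) p.2 g)]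
  push_cast
  exact Finset.sum_congr rfl fun p _ => hF p.1 p.2

lemma NN.mul {f g : PowerSeries ℚ} (hf : NN f) (hg : NN g) : NN (f * g) := by
  intro n
  have h : NNupto n f := fun k _ => hf k
  exact (h.mulNN hg) n le_rfl

lemma NN.pow {f : PowerSeries ℚ} (hf : NN f) (k : ℕ) : NN (f ^ k) := by
  induction k with
  | zero => simpa using NN.one
  | succ k ih => rw [pow_succ]; exact ih.mul hf

lemma NN.prod {ι : Type*} {s : Finset ι} {f : ι → PowerSeries ℚ}
    (h : ∀ i ∈ s, NN (f i)) : NN (∏ i ∈ s, f i) := by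
  classical
  induction s using Finset.induction with
  | empty => simpa using NN.one
  | @insert x s hx ih =>
    rw [Finset.prod_insert hx]
    exact (h _ (mem_insert_self _ _)).mul (ih fun i hi => h i (mem_insert_of_mem hi))

lemma coeff_eq_zero_of_dvd {N : ℕ} {f : PowerSeries ℚ} (h : (X : PowerSeries ℚ) ^ (N + 1) ∣ f)
    {n : ℕ} (hn : n ≤ N) : coeff (R := ℚ) n f = 0 := by
  rw [PowerSeries.X_pow_dvd_iff] at h
  exact h n (by omega)

lemma NNupto.add_dvd {N : ℕ} {f g : PowerSeries ℚ} (hf : NNupto N f)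
    (hg : (X : PowerSeries ℚ) ^ (N + 1) ∣ g) : NNupto N (f + g) := by
  intro n hn
  obtain ⟨m, hm⟩ := hf n hn
  exact ⟨m, by rw [map_add, hm, coeff_eq_zero_of_dvd hg hn, add_zero]⟩

/-- truncated letter series -/
def Tser (N : ℕ) (t : ℕ → ℕ) : PowerSeries ℚ := ∑ i ∈ Icc 1 N, (C (R := ℚ) (t i)) * X ^ i

/-- truncated product `∏ (1-X^i)^(t i)` -/
def Pser (N : ℕ) (t : ℕ → ℕ) : PowerSeries ℚ := ∏ i ∈ Icc 1 N, (1 - X ^ i) ^ (t i)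

lemma coeff_Tser (N : ℕ) (t : ℕ → ℕ) (j : ℕ) :
    coeff (R := ℚ) j (Tser N t) = if j ∈ Icc 1 N then (t j : ℚ) else 0 := by
  rw [Tser, map_sum]
  simp only [PowerSeries.coeff_C_mul, PowerSeries.coeff_X_pow, mul_ite, mul_one, mul_zero]
  exact Finset.sum_ite_eq (Icc 1 N) j _

lemma constantCoeff_Tser (N : ℕ) (t : ℕ → ℕ) : constantCoeff (R := ℚ) (Tser N t) = 0 := by
  have h := coeff_Tser N t 0
  rw [PowerSeries.coeff_zero_eq_constantCoeff] at h
  rw [h, if_neg (by simp)]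

/-- X^(N+1) divides the difference of inverses of series agreeing up to degree N -/
lemma dvd_sub_inv {N : ℕ} {A B U V : PowerSeries ℚ}
    (hU : (1 - A) * U = 1) (hV : (1 - B) * V = 1)
    (h : (X : PowerSeries ℚ) ^ (N + 1) ∣ A - B) :
    (X : PowerSeries ℚ) ^ (N + 1) ∣ U - V := by
  have key : U - V = U * V * (A - B) := by
    have h1 : U * ((1 - B) * V) = U := by rw [hV, mul_one]
    have h2 : ((1 - A) * U) * V = V := by rw [hU, one_mul]
    calc U - V = U * ((1 - B) * V) - ((1 - A) * U) * V := by rw [h1, h2]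
    _ = U * V * (A - B) := by ring
  rw [key]
  exact Dvd.dvd.mul_left h _

/-- removing one letter of size `s` -/
def tmF (s : ℕ) (t : ℕ → ℕ) : ℕ → ℕ := fun i => if i = s then t s - 1 else t i

/-- the derived alphabet after elimination of one letter of size `s` (truncated at `N`) -/
def t2F (N s : ℕ) (t : ℕ → ℕ) : ℕ → ℕ := fun j =>
  if j ≤ N then ∑ a ∈ range (j + 1), (if s ∣ (j - a) then tmF s t a else 0) else 0

/-- The key elimination induction: for any finitely supported family of "letters"
(`t i` letters of size `i`, sizes in `[s,N]`), the series
`∏ (1-X^i)^(t i) / (1 - ∑ t i X^i)` has natural coefficients up to degree `N`. -/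
theorem claimC (N : ℕ) (s : ℕ) (hs1 : 1 ≤ s) (t : ℕ → ℕ)
    (hsupp : ∀ i, t i ≠ 0 → s ≤ i ∧ i ≤ N)
    (U : PowerSeries ℚ) (hU : (1 - Tser N t) * U = 1) :
    NNupto N (Pser N t * U) := by
  by_cases hsN : N < s
  · -- base case : no letters at all
    have ht : ∀ i ∈ Icc 1 N, t i = 0 := by
      intro i hi
      rw [mem_Icc] at hi
      by_contra h
      exact absurd (hsupp i h).1 (by omega)
    have hT : Tser N t = 0 := by
      rw [Tser]
      apply Finset.sum_eq_zero
      intro i hi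
      rw [ht i hi]; simp
    have hU1 : U = 1 := by rw [hT, sub_zero, one_mul] at hU; exact hU
    have hP : Pser N t = 1 := by
      rw [Pser]
      apply Finset.prod_eq_one
      intro i hi
      rw [ht i hi, pow_zero]
    rw [hU1, hP, mul_one]
    intro n _
    exact NN.one n
  · push_neg at hsN
    by_cases hts : t s = 0
    · -- minimal support index moves up
      refine claimC N (s + 1) (by omega) t ?_ U hU
      intro i hi
      obtain ⟨h1, h2⟩ := hsupp i hi
      refine ⟨?_, h2⟩
      rcases eq_or_lt_of_le h1 with rfl | h
      · exact absurd hts hi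
      · omega
    · -- main case: remove one letter of minimal size s
      have hsIcc : s ∈ Icc 1 N := by rw [mem_Icc]; omega
      have ht0 : t 0 = 0 := by
        by_contra h; exact absurd (hsupp 0 h).1 (by omega)
      have htms : tmF s t s = t s - 1 := by simp [tmF]
      have htm0 : tmF s t 0 = 0 := by
        simp only [tmF]
        rw [if_neg (by omega)]
        exact ht0
      have htm_supp : ∀ i, tmF s t i ≠ 0 → s ≤ i ∧ i ≤ N := by
        intro i hi
        simp only [tmF] at hi
        by_cases h : i = s
        · subst h; exact ⟨le_rfl, hsN⟩
        · rw [if_neg h] at hi; exact hsupp i hi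
      have ht2 : ∀ j, j ≤ N →
          t2F N s t j = ∑ a ∈ range (j + 1), (if s ∣ (j - a) then tmF s t a else 0) := by
        intro j hj
        simp only [t2F]
        rw [if_pos hj]
      -- (f1) : Tser N t = Tser N tm + X^s
      have f1 : Tser N t = Tser N (tmF s t) + X ^ s := by
        ext j
        rw [map_add, coeff_Tser, coeff_Tser, PowerSeries.coeff_X_pow]
        by_cases hj : j = s
        · rw [hj, if_pos hsIcc, if_pos hsIcc, if_pos rfl, htms,
            Nat.cast_sub (by omega : 1 ≤ t s)]
          push_cast; ring
        · have htmj : tmF s t j = t j := by simp [tmF, hj]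
          rw [if_neg hj, add_zero, htmj]
      -- (f3) coefficients of `Tser N tm * geom s` up to N are `t2`
      have f3 : ∀ j ≤ N, coeff (R := ℚ) j (Tser N (tmF s t) * geom s) = (t2F N s t j : ℚ) := by
        intro j hj
        have hr : ((t2F N s t j : ℕ) : ℚ)
            = ∑ a ∈ range (j + 1), (if s ∣ j - a then (tmF s t a : ℚ) else 0) := by
          rw [ht2 j hj, Nat.cast_sum]
          exact Finset.sum_congr rfl fun a _ => by split <;> simp
        rw [PowerSeries.coeff_mul, Finset.Nat.sum_antidiagonal_eq_sum_range_succ_mk, hr]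
        apply Finset.sum_congr rfl
        intro a ha
        rw [mem_range] at ha
        simp only [coeff_Tser, geom, coeff_mk, mul_ite, mul_one, mul_zero]
        by_cases haI : a ∈ Icc 1 N
        · rw [if_pos haI]
        · rw [if_neg haI]
          have ha0 : a = 0 := by
            rw [mem_Icc] at haI
            omega
          subst ha0
          simp [htm0]
      -- (f4) tm j ≤ t2 j for j ≤ N
      have f4 : ∀ j, j ≤ N → tmF s t j ≤ t2F N s t j := by
        intro j hj
        rw [ht2 j hj]
        have hjm : j ∈ range (j + 1) := self_mem_range_succ j
        have hle := Finset.single_le_sum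
          (f := fun a => if s ∣ j - a then tmF s t a else 0) (fun a _ => Nat.zero_le _) hjm
        simpa [Nat.sub_self] using hle
      -- (f5) t2 s = t s - 1
      have f5 : t2F N s t s = t s - 1 := by
        rw [ht2 s hsN]
        rw [Finset.sum_eq_single_of_mem s (self_mem_range_succ s)]
        · rw [Nat.sub_self, if_pos (dvd_zero s), htms]
        · intro b hb hbs
          rw [mem_range] at hb
          rcases Nat.eq_zero_or_pos b with rfl | hb0
          · rw [if_pos (by simpa using dvd_refl s), htm0]
          · have hnd : ¬ s ∣ s - b := by
              intro hd
              have h1 : 0 < s - b := by omega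
              have := Nat.le_of_dvd h1 hd
              omega
            rw [if_neg hnd]
      -- (f6) support of t2
      have f6 : ∀ j, t2F N s t j ≠ 0 → s ≤ j ∧ j ≤ N := by
        intro j hj
        by_cases hjN : j ≤ N
        · rw [ht2 j hjN] at hj
          refine ⟨?_, hjN⟩
          obtain ⟨a, ha, hne⟩ := Finset.exists_ne_zero_of_sum_ne_zero hj
          by_cases hd : s ∣ j - a
          · rw [if_pos hd] at hne
            have h1 := (htm_supp a hne).1
            rw [mem_range] at ha; omega
          · rw [if_neg hd] at hne; exact absurd rfl hne
        · exfalso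
          apply hj
          simp only [t2F]
          rw [if_neg hjN]
      -- (f2) Pser N t = (1 - X^s) * Pser N tm
      have f2 : Pser N t = (1 - X ^ s) * Pser N (tmF s t) := by
        have hti : ∀ i ∈ Icc 1 N, ((1 : PowerSeries ℚ) - X ^ i) ^ (t i)
            = (1 - X ^ i) ^ (tmF s t i) * (1 - X ^ i) ^ (if i = s then 1 else 0) := by
          intro i _
          rw [← pow_add]
          congr 1
          simp only [tmF]
          by_cases h : i = s
          · rw [if_pos h, if_pos h]; subst h; omega
          · rw [if_neg h, if_neg h, add_zero]
        rw [Pser, Pser, Finset.prod_congr rfl hti, Finset.prod_mul_distrib]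
        have hps : ∏ i ∈ Icc 1 N, ((1 : PowerSeries ℚ) - X ^ i) ^ (if i = s then 1 else 0)
            = 1 - X ^ s := by
          have h1 : ∀ i, ((1 : PowerSeries ℚ) - X ^ i) ^ (if i = s then 1 else 0)
              = if i = s then 1 - X ^ i else 1 := fun i => by split <;> simp
          rw [Finset.prod_congr rfl (fun i _ => h1 i), Finset.prod_ite_eq' (Icc 1 N) s
            (fun i => (1 : PowerSeries ℚ) - X ^ i), if_pos hsIcc]
        rw [hps, mul_comm]
      -- excess exponents
      have f12 : Pser N (t2F N s t) = Pser N (tmF s t)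
          * ∏ i ∈ Icc 1 N, ((1 : PowerSeries ℚ) - X ^ i) ^ (t2F N s t i - tmF s t i) := by
        rw [Pser, Pser, ← Finset.prod_mul_distrib]
        apply Finset.prod_congr rfl
        intro i hi
        rw [← pow_add]
        congr 1
        have h4 := f4 i (mem_Icc.mp hi).2
        omega
      have hGNN : NN (∏ i ∈ Icc 1 N, (geom i) ^ (t2F N s t i - tmF s t i)) :=
        NN.prod fun i _ => (geom_NN i).pow _
      have f13 : (∏ i ∈ Icc 1 N, ((1 : PowerSeries ℚ) - X ^ i) ^ (t2F N s t i - tmF s t i))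
          * (∏ i ∈ Icc 1 N, (geom i) ^ (t2F N s t i - tmF s t i)) = 1 := by
        rw [← Finset.prod_mul_distrib]
        apply Finset.prod_eq_one
        intro i hi
        rw [← mul_pow, geom_inv (mem_Icc.mp hi).1, one_pow]
      have f14 : Pser N (tmF s t) = Pser N (t2F N s t)
          * (∏ i ∈ Icc 1 N, (geom i) ^ (t2F N s t i - tmF s t i)) := by
        rw [f12, mul_assoc, f13, mul_one]
      -- new inverses
      have f8 : (1 - Tser N (tmF s t) * geom s) * ((1 - X ^ s) * U) = 1 := by
        rw [← mul_assoc]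
        have hkey : (1 - Tser N (tmF s t) * geom s) * (1 - X ^ s) = 1 - Tser N t := by
          have hg : geom s * (1 - X ^ s) = 1 := by rw [mul_comm]; exact geom_inv hs1
          calc (1 - Tser N (tmF s t) * geom s) * (1 - X ^ s)
              = (1 - X ^ s) - Tser N (tmF s t) * (geom s * (1 - X ^ s)) := by ring
          _ = (1 - X ^ s) - Tser N (tmF s t) := by rw [hg, mul_one]
          _ = 1 - Tser N t := by rw [f1]; ring
        rw [hkey, hU]
      have hc2 : constantCoeff (R := ℚ) (1 - Tser N (t2F N s t)) = 1 := by
        rw [map_sub, map_one, constantCoeff_Tser, sub_zero]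
      have hU2 : (1 - Tser N (t2F N s t)) * invOfUnit (1 - Tser N (t2F N s t)) 1 = 1 :=
        PowerSeries.mul_invOfUnit _ 1 (by rw [hc2]; simp)
      -- (f7) the two letter series agree up to degree N
      have f7 : (X : PowerSeries ℚ) ^ (N + 1)
          ∣ (Tser N (tmF s t) * geom s - Tser N (t2F N s t)) := by
        rw [PowerSeries.X_pow_dvd_iff]
        intro m hm
        have hmN : m ≤ N := by omega
        rw [map_sub, f3 m hmN, coeff_Tser]
        by_cases h : m ∈ Icc 1 N
        · rw [if_pos h]; ring
        · rw [if_neg h]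
          have hm0 : m = 0 := by rw [mem_Icc] at h; omega
          subst hm0
          have h20 : t2F N s t 0 = 0 := by
            rw [ht2 0 (Nat.zero_le N), Finset.sum_range_one,
              if_pos (by simpa using dvd_zero s), htm0]
          rw [h20]; simp
      have f10 : (X : PowerSeries ℚ) ^ (N + 1)
          ∣ (1 - X ^ s) * U - invOfUnit (1 - Tser N (t2F N s t)) 1 :=
        dvd_sub_inv f8 hU2 f7
      -- recursive call
      have IH := claimC N s hs1 (t2F N s t) f6 (invOfUnit (1 - Tser N (t2F N s t)) 1) hU2
      -- assembly
      have final : Pser N t * U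
          = (Pser N (t2F N s t) * invOfUnit (1 - Tser N (t2F N s t)) 1)
              * (∏ i ∈ Icc 1 N, (geom i) ^ (t2F N s t i - tmF s t i))
            + (Pser N (t2F N s t) * (∏ i ∈ Icc 1 N, (geom i) ^ (t2F N s t i - tmF s t i)))
              * ((1 - X ^ s) * U - invOfUnit (1 - Tser N (t2F N s t)) 1) := by
        rw [f2, f14]
        ring
      rw [final]
      exact (IH.mulNN hGNN).add_dvd (Dvd.dvd.mul_left f10 _)
termination_by (N + 1 - s, t s)
decreasing_by
  · exact Prod.Lex.left _ _ (by omega)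
  · exact Prod.Lex.right _ (by omega)

/-- quadratic (Catalan) identity -/
lemma Tkey (D : ℕ) (t : ℕ → ℕ) (ht : ∀ n, t n = if n = 0 then 0 else D ^ n * catalan (n - 1)) :
    (PowerSeries.mk fun n => (t n : ℚ)) * (1 - PowerSeries.mk fun n => (t n : ℚ))
      = C (R := ℚ) (D : ℚ) * X := by
  ext n
  rw [mul_sub, mul_one, map_sub, PowerSeries.coeff_mul,
    Finset.Nat.sum_antidiagonal_eq_sum_range_succ_mk, PowerSeries.coeff_C_mul,
    PowerSeries.coeff_X]
  simp only [coeff_mk]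
  have ht00 : (t 0 : ℚ) = 0 := by rw [ht]; simp
  match n with
  | 0 => simp [ht]
  | 1 => simp [ht, Finset.sum_range_succ]
  | (k+2) =>
    rw [if_neg (by omega), mul_zero, sub_eq_zero]
    rw [Finset.sum_range_succ', Finset.sum_range_succ]
    have hz1 : (t 0 : ℚ) * (t (k + 2 - 0) : ℚ) = 0 := by rw [ht00]; ring
    have hz2 : (t (k + 1 + 1) : ℚ) * (t (k + 2 - (k + 1 + 1)) : ℚ) = 0 := by
      rw [show k + 2 - (k + 1 + 1) = 0 by omega, ht00]; ring
    rw [hz1, hz2, add_zero, add_zero]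
    have hterm : ∀ i ∈ range (k + 1),
        (t (i + 1) : ℚ) * (t (k + 2 - (i + 1)) : ℚ)
          = (D : ℚ) ^ (k + 2) * ((catalan i : ℚ) * (catalan (k - i) : ℚ)) := by
      intro i hi
      rw [mem_range] at hi
      have e1 : k + 2 - (i + 1) = k + 1 - i := by omega
      have e2 : t (i + 1) = D ^ (i + 1) * catalan i := by rw [ht]; simp
      have e3 : t (k + 1 - i) = D ^ (k + 1 - i) * catalan (k - i) := by
        rw [ht, if_neg (by omega)]
        congr 2
        omega
      rw [e1, e2, e3]
      push_cast
      rw [show ((D : ℚ) ^ (k + 2)) = (D : ℚ) ^ (i + 1) * (D : ℚ) ^ (k + 1 - i) by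
        rw [← pow_add]; congr 1; omega]
      ring
    rw [Finset.sum_congr rfl hterm, ← Finset.mul_sum]
    have hcat : catalan (k + 1) = ∑ i ∈ range (k + 1), catalan i * catalan (k - i) := by
      rw [catalan_succ]
      exact Fin.sum_univ_eq_sum_range (fun i => catalan i * catalan (k - i)) (k + 1)
    have e4 : (t (k + 2) : ℚ) = (D : ℚ) ^ (k + 2) * (catalan (k + 1) : ℚ) := by
      rw [ht, if_neg (by omega)]
      push_cast
      norm_num
    rw [e4, hcat]
    push_cast
    ring

/- low-degree coefficient lemmas -/

lemma constCoeff_pow (i e : ℕ) (hi : 1 ≤ i) :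
    constantCoeff (R := ℚ) (((1 : PowerSeries ℚ) - X ^ i) ^ e) = 1 := by
  rw [map_pow, map_sub, map_one, map_pow, constantCoeff_X, zero_pow (by omega), sub_zero, one_pow]

lemma coeff_lt (i e j : ℕ) (h0 : 0 < j) (hji : j < i) :
    coeff (R := ℚ) j (((1 : PowerSeries ℚ) - X ^ i) ^ e) = 0 := by
  induction e with
  | zero => rw [pow_zero, PowerSeries.coeff_one, if_neg (by omega)]
  | succ e ih =>
    rw [pow_succ, mul_sub, mul_one, map_sub, ih,
      show ((1 : PowerSeries ℚ) - X ^ i) ^ e * X ^ i = X ^ i * ((1 : PowerSeries ℚ) - X ^ i) ^ e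
        from mul_comm _ _,
      PowerSeries.coeff_X_pow_mul', if_neg (by omega)]
    ring

lemma coeff_at_i (i e : ℕ) (hi : 1 ≤ i) :
    coeff (R := ℚ) i (((1 : PowerSeries ℚ) - X ^ i) ^ e) = -(e : ℚ) := by
  induction e with
  | zero =>
    rw [pow_zero, PowerSeries.coeff_one, if_neg (by omega)]
    simp
  | succ e ih =>
    rw [pow_succ, mul_sub, mul_one, map_sub, ih,
      show ((1 : PowerSeries ℚ) - X ^ i) ^ e * X ^ i = X ^ i * ((1 : PowerSeries ℚ) - X ^ i) ^ e
        from mul_comm _ _,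
      PowerSeries.coeff_X_pow_mul', if_pos le_rfl, Nat.sub_self,
      PowerSeries.coeff_zero_eq_constantCoeff, constCoeff_pow i e hi]
    push_cast
    ring

lemma coeff_two_one_sub_X (e : ℕ) :
    coeff (R := ℚ) 2 (((1 : PowerSeries ℚ) - X ^ 1) ^ e) = (e.choose 2 : ℚ) := by
  induction e with
  | zero =>
    rw [pow_zero, PowerSeries.coeff_one]
    simp
  | succ e ih =>
    rw [pow_succ, mul_sub, mul_one, map_sub, ih,
      show ((1 : PowerSeries ℚ) - X ^ 1) ^ e * X ^ 1 = X ^ 1 * ((1 : PowerSeries ℚ) - X ^ 1) ^ e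
        from mul_comm _ _,
      PowerSeries.coeff_X_pow_mul', if_pos (by omega : 1 ≤ 2)]
    have h1 : coeff (R := ℚ) (2 - 1) (((1 : PowerSeries ℚ) - X ^ 1) ^ e) = -(e : ℚ) :=
      coeff_at_i 1 e le_rfl
    rw [h1, Nat.choose_succ_succ e 1, Nat.choose_one_right]
    push_cast
    ring

lemma coeff1_mul (f g : PowerSeries ℚ) :
    coeff (R := ℚ) 1 (f * g) = coeff (R := ℚ) 0 f * coeff (R := ℚ) 1 g + coeff (R := ℚ) 1 f * coeff (R := ℚ) 0 g := by
  rw [PowerSeries.coeff_mul, Finset.Nat.sum_antidiagonal_eq_sum_range_succ_mk,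
    Finset.sum_range_succ, Finset.sum_range_one]

lemma coeff2_mul (f g : PowerSeries ℚ) :
    coeff (R := ℚ) 2 (f * g) = coeff (R := ℚ) 0 f * coeff (R := ℚ) 2 g + coeff (R := ℚ) 1 f * coeff (R := ℚ) 1 g
      + coeff (R := ℚ) 2 f * coeff (R := ℚ) 0 g := by
  rw [PowerSeries.coeff_mul, Finset.Nat.sum_antidiagonal_eq_sum_range_succ_mk,
    Finset.sum_range_succ, Finset.sum_range_succ, Finset.sum_range_one]
  try norm_num

lemma coeff3_mul (f g : PowerSeries ℚ) :
    coeff (R := ℚ) 3 (f * g) = coeff (R := ℚ) 0 f * coeff (R := ℚ) 3 g + coeff (R := ℚ) 1 f * coeff (R := ℚ) 2 g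
      + coeff (R := ℚ) 2 f * coeff (R := ℚ) 1 g + coeff (R := ℚ) 3 f * coeff (R := ℚ) 0 g := by
  rw [PowerSeries.coeff_mul, Finset.Nat.sum_antidiagonal_eq_sum_range_succ_mk,
    Finset.sum_range_succ, Finset.sum_range_succ, Finset.sum_range_succ, Finset.sum_range_one]
  try norm_num

end

end BraceLowAux

/-- Let `T(x) = (1-√(1-4Dx))/2 = ∑ t'ₙ xⁿ` with `t'ₙ = Dⁿ·Catalan(n-1)` (the series of
planar rooted trees decorated by a `D`-element set) and let
`V(x) = T(x)·∏_{i≥1}(1-x^i)^{t'ᵢ}` (coefficients computed with the harmlessly truncated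
product).  Then all coefficients of `V` are non-negative integers, the coefficient of
`x²` is `0`, and the coefficient of `x³` is `D²(D-1)/2`. -/
theorem brace_preLie_generators_low (D : ℕ) (hD : 1 ≤ D) :
    let t' : ℕ → ℕ := fun n => if n = 0 then 0 else D ^ n * catalan (n - 1)
    let T : PowerSeries ℚ := PowerSeries.mk fun n => (t' n : ℚ)
    let V : ℕ → ℚ := fun N =>
      (PowerSeries.coeff (R := ℚ) N) (T * ∏ i ∈ Finset.Icc 1 N, (1 - PowerSeries.X ^ i) ^ t' i)
    (∀ N, ∃ m : ℕ, V N = m) ∧ V 2 = 0 ∧ V 3 = ((D : ℚ) ^ 2 * ((D : ℚ) - 1)) / 2 := by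
  intro t' T V
  open PowerSeries Finset BraceLowAux in
  have ht'def : ∀ n, t' n = if n = 0 then 0 else D ^ n * catalan (n - 1) := fun _ => rfl
  have hTdef : T = PowerSeries.mk fun n => (t' n : ℚ) := rfl
  have hVdef : ∀ N, V N = (PowerSeries.coeff (R := ℚ) N)
      (T * ∏ i ∈ Finset.Icc 1 N, (1 - PowerSeries.X ^ i) ^ t' i) := fun _ => rfl
  have ht'0 : t' 0 = 0 := rfl
  have ht'1 : t' 1 = D := by rw [ht'def]; norm_num
  have ht'2 : t' 2 = D ^ 2 := by rw [ht'def]; norm_num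
  have ht'3 : t' 3 = 2 * D ^ 3 := by rw [ht'def]; norm_num [catalan_two]; ring
  have hcoeffT : ∀ n, PowerSeries.coeff (R := ℚ) n T = (t' n : ℚ) := fun n => by
    rw [hTdef, PowerSeries.coeff_mk]
  refine ⟨?_, ?_, ?_⟩
  · -- all coefficients are naturals
    intro N
    rcases Nat.eq_zero_or_pos N with rfl | hN
    · refine ⟨0, ?_⟩
      rw [hVdef, show Finset.Icc 1 0 = (∅ : Finset ℕ) from Finset.Icc_eq_empty (by omega),
        Finset.prod_empty, mul_one, hcoeffT, ht'0]
    · obtain ⟨n, rfl⟩ : ∃ n, N = n + 1 := ⟨N - 1, by omega⟩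
      set tr : ℕ → ℕ := fun i => if i ≤ n + 1 then t' i else 0 with htr
      have hsupp : ∀ i, tr i ≠ 0 → 1 ≤ i ∧ i ≤ n + 1 := by
        intro i hi
        rw [htr] at hi; simp only at hi
        by_cases h : i ≤ n + 1
        · rw [if_pos h] at hi
          refine ⟨?_, h⟩
          rcases Nat.eq_zero_or_pos i with rfl | h1
          · exact absurd ht'0 hi
          · omega
        · rw [if_neg h] at hi; exact absurd rfl hi
      have hPeq : (∏ i ∈ Finset.Icc 1 (n+1), ((1 : PowerSeries ℚ) - X ^ i) ^ t' i)
          = Pser (n+1) tr := by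
        rw [Pser]
        apply Finset.prod_congr rfl
        intro i hi
        rw [Finset.mem_Icc] at hi
        rw [htr]
        simp only [if_pos hi.2]
      have hc1 : PowerSeries.constantCoeff (R := ℚ) (1 - Tser (n+1) tr) = 1 := by
        rw [map_sub, map_one, constantCoeff_Tser, sub_zero]
      have hU : (1 - Tser (n+1) tr) * PowerSeries.invOfUnit (1 - Tser (n+1) tr) 1 = 1 :=
        PowerSeries.mul_invOfUnit _ 1 (by rw [hc1]; simp)
      set U : PowerSeries ℚ := PowerSeries.invOfUnit (1 - Tser (n+1) tr) 1 with hUdef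
      have hcT : PowerSeries.constantCoeff (R := ℚ) T = 0 := by
        rw [← PowerSeries.coeff_zero_eq_constantCoeff, hcoeffT, ht'0]
        norm_num
      have hW : (1 - T) * PowerSeries.invOfUnit (1 - T) 1 = 1 :=
        PowerSeries.mul_invOfUnit _ 1 (by rw [map_sub, map_one, hcT, sub_zero]; simp)
      set W : PowerSeries ℚ := PowerSeries.invOfUnit (1 - T) 1 with hWdef
      have hdvd1 : (X : PowerSeries ℚ) ^ (n + 2) ∣ T - Tser (n+1) tr := by
        rw [PowerSeries.X_pow_dvd_iff]
        intro m hm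
        rw [map_sub, hcoeffT, coeff_Tser]
        by_cases h : m ∈ Finset.Icc 1 (n+1)
        · rw [if_pos h, htr]
          rw [Finset.mem_Icc] at h
          simp only [if_pos h.2]
          ring
        · rw [if_neg h]
          rw [Finset.mem_Icc] at h
          have hm0 : m = 0 := by omega
          subst hm0
          rw [ht'0]; norm_num
      have hWU : (X : PowerSeries ℚ) ^ (n + 2) ∣ W - U :=
        dvd_sub_inv (N := n + 1) (A := T) (B := Tser (n+1) tr) hW hU hdvd1
      have hkey : T * (1 - T) = PowerSeries.C (R := ℚ) (D : ℚ) * X := by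
        rw [hTdef]
        exact Tkey D t' ht'def
      have hTP : T * Pser (n+1) tr = (PowerSeries.C (R := ℚ) (D : ℚ)) * (X * (Pser (n+1) tr * U))
          + (PowerSeries.C (R := ℚ) (D : ℚ) * X * Pser (n+1) tr) * (W - U) := by
        have h1 : T * Pser (n+1) tr = (T * (1 - T)) * (Pser (n+1) tr * W) := by
          conv_lhs => rw [← mul_one (T * Pser (n+1) tr), ← hW]
          ring
        rw [h1, hkey]
        ring
      obtain ⟨m, hm⟩ := claimC (n+1) 1 le_rfl tr hsupp U hU n (by omega)
      refine ⟨D * m, ?_⟩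
      rw [hVdef, hPeq, hTP, map_add, PowerSeries.coeff_C_mul,
        PowerSeries.coeff_succ_X_mul, hm,
        coeff_eq_zero_of_dvd (Dvd.dvd.mul_left hWU _) (le_refl (n+1)), add_zero]
      push_cast
      ring
  · -- V 2 = 0
    rw [hVdef, show Finset.Icc 1 2 = ({1, 2} : Finset ℕ) from by decide,
      Finset.prod_insert (by decide), Finset.prod_singleton]
    have hA0 : PowerSeries.coeff (R := ℚ) 0 (((1 : PowerSeries ℚ) - X ^ 1) ^ t' 1) = 1 := by
      rw [PowerSeries.coeff_zero_eq_constantCoeff, constCoeff_pow 1 _ le_rfl]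
    have hB0 : PowerSeries.coeff (R := ℚ) 0 (((1 : PowerSeries ℚ) - X ^ 2) ^ t' 2) = 1 := by
      rw [PowerSeries.coeff_zero_eq_constantCoeff, constCoeff_pow 2 _ (by omega)]
    have hA1 : PowerSeries.coeff (R := ℚ) 1 (((1 : PowerSeries ℚ) - X ^ 1) ^ t' 1) = -(D : ℚ) := by
      rw [coeff_at_i 1 (t' 1) le_rfl, ht'1]
    have hB1 : PowerSeries.coeff (R := ℚ) 1 (((1 : PowerSeries ℚ) - X ^ 2) ^ t' 2) = 0 :=
      coeff_lt 2 (t' 2) 1 (by omega) (by omega)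
    have hAB0 : PowerSeries.coeff (R := ℚ) 0
        (((1 : PowerSeries ℚ) - X ^ 1) ^ t' 1 * ((1 : PowerSeries ℚ) - X ^ 2) ^ t' 2) = 1 := by
      rw [PowerSeries.coeff_zero_eq_constantCoeff, map_mul, constCoeff_pow 1 _ le_rfl,
        constCoeff_pow 2 _ (by omega)]
      norm_num
    have hAB1 : PowerSeries.coeff (R := ℚ) 1
        (((1 : PowerSeries ℚ) - X ^ 1) ^ t' 1 * ((1 : PowerSeries ℚ) - X ^ 2) ^ t' 2)
        = -(D : ℚ) := by
      rw [coeff1_mul, hA0, hA1, hB0, hB1]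
      ring
    rw [coeff2_mul, hcoeffT 0, hcoeffT 1, hcoeffT 2, hAB0, hAB1, ht'0, ht'1, ht'2]
    push_cast
    ring
  · -- V 3 = D^2 (D-1)/2
    rw [hVdef, show Finset.Icc 1 3 = ({1, 2, 3} : Finset ℕ) from by decide,
      Finset.prod_insert (by decide), Finset.prod_insert (by decide), Finset.prod_singleton]
    have ha0 : PowerSeries.coeff (R := ℚ) 0 (((1 : PowerSeries ℚ) - X ^ 1) ^ t' 1) = 1 := by
      rw [PowerSeries.coeff_zero_eq_constantCoeff, constCoeff_pow 1 _ le_rfl]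
    have hb0 : PowerSeries.coeff (R := ℚ) 0 (((1 : PowerSeries ℚ) - X ^ 2) ^ t' 2) = 1 := by
      rw [PowerSeries.coeff_zero_eq_constantCoeff, constCoeff_pow 2 _ (by omega)]
    have hc0 : PowerSeries.coeff (R := ℚ) 0 (((1 : PowerSeries ℚ) - X ^ 3) ^ t' 3) = 1 := by
      rw [PowerSeries.coeff_zero_eq_constantCoeff, constCoeff_pow 3 _ (by omega)]
    have ha1 : PowerSeries.coeff (R := ℚ) 1 (((1 : PowerSeries ℚ) - X ^ 1) ^ t' 1) = -(D : ℚ) := by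
      rw [coeff_at_i 1 (t' 1) le_rfl, ht'1]
    have ha2 : PowerSeries.coeff (R := ℚ) 2 (((1 : PowerSeries ℚ) - X ^ 1) ^ t' 1)
        = ((t' 1).choose 2 : ℚ) := coeff_two_one_sub_X (t' 1)
    have hb1 : PowerSeries.coeff (R := ℚ) 1 (((1 : PowerSeries ℚ) - X ^ 2) ^ t' 2) = 0 :=
      coeff_lt 2 _ 1 (by omega) (by omega)
    have hb2 : PowerSeries.coeff (R := ℚ) 2 (((1 : PowerSeries ℚ) - X ^ 2) ^ t' 2)
        = -((D : ℚ) ^ 2) := by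
      rw [coeff_at_i 2 (t' 2) (by omega), ht'2]
      push_cast
      ring
    have hc1 : PowerSeries.coeff (R := ℚ) 1 (((1 : PowerSeries ℚ) - X ^ 3) ^ t' 3) = 0 :=
      coeff_lt 3 _ 1 (by omega) (by omega)
    have hc2 : PowerSeries.coeff (R := ℚ) 2 (((1 : PowerSeries ℚ) - X ^ 3) ^ t' 3) = 0 :=
      coeff_lt 3 _ 2 (by omega) (by omega)
    have hbc0 : PowerSeries.coeff (R := ℚ) 0
        (((1 : PowerSeries ℚ) - X ^ 2) ^ t' 2 * ((1 : PowerSeries ℚ) - X ^ 3) ^ t' 3) = 1 := by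
      rw [PowerSeries.coeff_zero_eq_constantCoeff, map_mul, constCoeff_pow 2 _ (by omega),
        constCoeff_pow 3 _ (by omega)]
      norm_num
    have hbc1 : PowerSeries.coeff (R := ℚ) 1
        (((1 : PowerSeries ℚ) - X ^ 2) ^ t' 2 * ((1 : PowerSeries ℚ) - X ^ 3) ^ t' 3) = 0 := by
      rw [coeff1_mul, hb0, hb1, hc0, hc1]
      ring
    have hbc2 : PowerSeries.coeff (R := ℚ) 2
        (((1 : PowerSeries ℚ) - X ^ 2) ^ t' 2 * ((1 : PowerSeries ℚ) - X ^ 3) ^ t' 3)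
        = -((D : ℚ) ^ 2) := by
      rw [coeff2_mul, hb0, hb1, hb2, hc0, hc1, hc2]
      ring
    have hq0 : PowerSeries.coeff (R := ℚ) 0
        (((1 : PowerSeries ℚ) - X ^ 1) ^ t' 1
          * (((1 : PowerSeries ℚ) - X ^ 2) ^ t' 2 * ((1 : PowerSeries ℚ) - X ^ 3) ^ t' 3))
        = 1 := by
      rw [PowerSeries.coeff_zero_eq_constantCoeff, map_mul, map_mul,
        constCoeff_pow 1 _ le_rfl, constCoeff_pow 2 _ (by omega), constCoeff_pow 3 _ (by omega)]
      norm_num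
    have hq1 : PowerSeries.coeff (R := ℚ) 1
        (((1 : PowerSeries ℚ) - X ^ 1) ^ t' 1
          * (((1 : PowerSeries ℚ) - X ^ 2) ^ t' 2 * ((1 : PowerSeries ℚ) - X ^ 3) ^ t' 3))
        = -(D : ℚ) := by
      rw [coeff1_mul, ha0, ha1, hbc0, hbc1]
      ring
    have hq2 : PowerSeries.coeff (R := ℚ) 2
        (((1 : PowerSeries ℚ) - X ^ 1) ^ t' 1
          * (((1 : PowerSeries ℚ) - X ^ 2) ^ t' 2 * ((1 : PowerSeries ℚ) - X ^ 3) ^ t' 3))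
        = ((t' 1).choose 2 : ℚ) - (D : ℚ) ^ 2 := by
      rw [coeff2_mul, ha0, ha1, ha2, hbc0, hbc1, hbc2]
      ring
    rw [coeff3_mul, hcoeffT 0, hcoeffT 1, hcoeffT 2, hcoeffT 3,
      hq0, hq1, hq2, ht'0, ht'1, ht'2, ht'3, Nat.cast_choose_two]
    push_cast
    ring
end
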